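/- Merging two coordinates with equal ratio preserves J_P: if x_k/y_k = x_l/y_l for distinct indices k, l, and x', y' are obtained from x, y by replacing coordinates k and l with a single coordinate of mass x_k+x_l and y_k+y_l respectively, then J_P(x', y') = J_P(x, y). -/

import Mathlib

open Finset

open Classical in
/-- The probability Jaccard similarity of two nonnegative vectors. -/
noncomputable def JP {ι : Type*} [Fintype ι] (x y : ι → ℝ) : ℝ :=
  ∑ i ∈ Finset.univ.filter (fun i => 0 < x i ∧ 0 < y i),
    (∑ j, max (x j / x i) (y j / y i))⁻¹

lemma max_div_add {a b c d p q : ℝ} (hb : 0 < b) (hd : 0 < d)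
    (hp : 0 < p) (hq : 0 < q) (h : a / b = c / d) :
    max ((a + c) / p) ((b + d) / q) = max (a / p) (b / q) + max (c / p) (d / q) := by
  have hcross : a * d = c * b := by
    field_simp at h; linarith
  rcases le_total (a * q) (b * p) with hle | hle
  · have h2 : c * q ≤ d * p := by nlinarith [mul_le_mul_of_nonneg_right hle hd.le]
    rw [max_eq_right, max_eq_right, max_eq_right, add_div]
    · rw [div_le_div_iff₀ hp hq]; nlinarith
    · rw [div_le_div_iff₀ hp hq]; nlinarith
    · rw [div_le_div_iff₀ hp hq]; nlinarith
  · have h2 : d * p ≤ c * q := by nlinarith [mul_le_mul_of_nonneg_right hle hd.le]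
    rw [max_eq_left, max_eq_left, max_eq_left, add_div]
    · rw [div_le_div_iff₀ hq hp]; nlinarith
    · rw [div_le_div_iff₀ hq hp]; nlinarith
    · rw [div_le_div_iff₀ hq hp]; nlinarith

/-- Merging two coordinates with equal ratio preserves `J_P`. -/
theorem JP_merge_equal_ratio {n : ℕ} (x y : Fin n → ℝ)
    (hx : ∀ i, 0 < x i) (hy : ∀ i, 0 < y i)
    (hxs : ∑ i, x i = 1) (hys : ∑ i, y i = 1)
    (k l : Fin n) (hkl : k ≠ l) (hratio : x k / y k = x l / y l) :
    JP (Function.update (Function.update x k (x k + x l)) l 0)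
       (Function.update (Function.update y k (y k + y l)) l 0) = JP x y := by
  classical
  set x' := Function.update (Function.update x k (x k + x l)) l 0 with hx'def
  set y' := Function.update (Function.update y k (y k + y l)) l 0 with hy'def
  have hx'l : x' l = 0 := Function.update_self _ _ _
  have hy'l : y' l = 0 := Function.update_self _ _ _
  have hx'k : x' k = x k + x l := by
    rw [hx'def, Function.update_of_ne hkl, Function.update_self]
  have hy'k : y' k = y k + y l := by
    rw [hy'def, Function.update_of_ne hkl, Function.update_self]
  have hx'j : ∀ j, j ≠ k → j ≠ l → x' j = x j := fun j hjk hjl => by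
    rw [hx'def, Function.update_of_ne hjl, Function.update_of_ne hjk]
  have hy'j : ∀ j, j ≠ k → j ≠ l → y' j = y j := fun j hjk hjl => by
    rw [hy'def, Function.update_of_ne hjl, Function.update_of_ne hjk]
  have hx'pos : ∀ i, i ≠ l → 0 < x' i := by
    intro i hil
    by_cases hik : i = k
    · subst hik; rw [hx'k]; exact add_pos (hx _) (hx _)
    · rw [hx'j i hik hil]; exact hx i
  have hy'pos : ∀ i, i ≠ l → 0 < y' i := by
    intro i hil
    by_cases hik : i = k
    · subst hik; rw [hy'k]; exact add_pos (hy _) (hy _)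
    · rw [hy'j i hik hil]; exact hy i
  set r := x k / y k with hrdef
  have hrpos : 0 < r := div_pos (hx k) (hy k)
  have hxk : x k = r * y k := by rw [hrdef, div_mul_cancel₀ _ (hy k).ne']
  have hxl : x l = r * y l := by rw [hratio, div_mul_cancel₀ _ (hy l).ne']
  -- generic splitting of sums
  have key : ∀ f : Fin n → ℝ, ∑ j, f j = (∑ j ∈ univ \ {k, l}, f j) + f k + f l := by
    intro f
    rw [← Finset.sum_sdiff (Finset.subset_univ ({k, l} : Finset (Fin n))),
      Finset.sum_pair hkl]
    ring
  -- inner sums agree for any positive denominators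
  have hsum : ∀ c d : ℝ, 0 < c → 0 < d →
      ∑ j, max (x' j / c) (y' j / d) = ∑ j, max (x j / c) (y j / d) := by
    intro c d hc hd
    rw [key, key]
    have h1 : ∑ j ∈ univ \ {k, l}, max (x' j / c) (y' j / d)
        = ∑ j ∈ univ \ {k, l}, max (x j / c) (y j / d) := by
      apply Finset.sum_congr rfl
      intro j hj
      simp only [Finset.mem_sdiff, Finset.mem_insert, Finset.mem_singleton, not_or] at hj
      rw [hx'j j hj.2.1 hj.2.2, hy'j j hj.2.1 hj.2.2]
    rw [h1, hx'k, hy'k, hx'l, hy'l,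
      max_div_add (hy k) (hy l) hc hd (hrdef ▸ hratio)]
    simp only [zero_div, max_self, add_zero]
    ring
  -- the common quantity T
  have hne : (Finset.univ : Finset (Fin n)).Nonempty := ⟨k, Finset.mem_univ k⟩
  set T := ∑ j, max (x j) (r * y j) with hTdef
  have hT : 0 < T := by
    apply Finset.sum_pos _ hne
    intro j _
    exact lt_max_of_lt_left (hx j)
  have hg : ∀ c d : ℝ, 0 < c → 0 < d → c = r * d →
      (∑ j, max (x j / c) (y j / d))⁻¹ = c / T := by
    intro c d hc hd hcd
    have hstep : ∑ j, max (x j / c) (y j / d) = T / c := by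
      rw [eq_div_iff hc.ne', Finset.sum_mul]
      apply Finset.sum_congr rfl
      intro j _
      rw [max_mul_of_nonneg _ _ hc.le]
      congr 1
      · field_simp
      · rw [hcd]; field_simp
    rw [hstep, inv_div]
  -- compute the filters
  have hfilter : (univ.filter (fun i => 0 < x' i ∧ 0 < y' i)) =
      univ.filter (fun i => i ≠ l) := by
    ext i
    simp only [Finset.mem_filter, Finset.mem_univ, true_and]
    constructor
    · rintro ⟨h1, _⟩
      intro hil
      subst hil
      rw [hx'l] at h1
      exact lt_irrefl 0 h1
    · intro h
      exact ⟨hx'pos i h, hy'pos i h⟩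
  have hsplit : (univ.filter (fun i => i ≠ l)) = insert k (univ \ {k, l}) := by
    ext i
    simp only [Finset.mem_filter, Finset.mem_univ, true_and, Finset.mem_insert,
      Finset.mem_sdiff, Finset.mem_singleton, not_or]
    constructor
    · intro h
      by_cases hik : i = k
      · exact Or.inl hik
      · exact Or.inr ⟨hik, h⟩
    · rintro (rfl | ⟨_, h⟩)
      · exact hkl
      · exact h
  rw [JP, JP]
  rw [show (Finset.univ.filter (fun i => 0 < x' i ∧ 0 < y' i)) =
      insert k (univ \ {k, l}) from hfilter.trans hsplit]
  rw [Finset.filter_true_of_mem (fun i _ => ⟨hx i, hy i⟩)]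
  rw [Finset.sum_insert (by simp)]
  rw [key (fun i => (∑ j, max (x j / x i) (y j / y i))⁻¹)]
  have hdiff : ∑ i ∈ univ \ {k, l}, (∑ j, max (x' j / x' i) (y' j / y' i))⁻¹
      = ∑ i ∈ univ \ {k, l}, (∑ j, max (x j / x i) (y j / y i))⁻¹ := by
    apply Finset.sum_congr rfl
    intro i hi
    simp only [Finset.mem_sdiff, Finset.mem_insert, Finset.mem_singleton, not_or] at hi
    rw [hx'j i hi.2.1 hi.2.2, hy'j i hi.2.1 hi.2.2, hsum _ _ (hx i) (hy i)]
  rw [hdiff]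
  have hmerge : (∑ j, max (x' j / x' k) (y' j / y' k))⁻¹
      = (∑ j, max (x j / x k) (y j / y k))⁻¹ + (∑ j, max (x j / x l) (y j / y l))⁻¹ := by
    rw [hx'k, hy'k, hsum _ _ (add_pos (hx k) (hx l)) (add_pos (hy k) (hy l))]
    rw [hg _ _ (add_pos (hx k) (hx l)) (add_pos (hy k) (hy l)) (by rw [hxk, hxl]; ring)]
    rw [hg _ _ (hx k) (hy k) hxk, hg _ _ (hx l) (hy l) hxl, ← add_div]
  rw [hmerge]
  ring
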